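/- The non-central Stirling numbers of the first kind with index 1 satisfy S_{j,l}^{(1)} = (-1)^{j-1} (j+l-1)!/l! for all integers j ≥ 1, l ≥ 0. -/

import Mathlib

set_option maxRecDepth 4000


/-- The non-central Stirling numbers of the first kind `S_{n,l}^{(j)}`, defined as the
coefficient of `x^j` in `x ∏_{k=l+1}^{n-1+l} (x - k)`. -/
noncomputable def ncStirling (n l j : ℕ) : ℝ :=
  (Polynomial.X * ∏ k ∈ Finset.Ico (l + 1) (n + l),
      (Polynomial.X - Polynomial.C (k : ℝ))).coeff j

lemma prod_Ico_fact (j l : ℕ) (hj : 1 ≤ j) :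
    l.factorial * ∏ k ∈ Finset.Ico (l + 1) (j + l), k = (j + l - 1).factorial := by
  induction j with
  | zero => omega
  | succ n ih =>
    rcases Nat.eq_or_lt_of_le hj with h | h
    · obtain rfl : n = 0 := by omega
      simp [show 0 + 1 + l = l + 1 from by omega]
    · have hn : 1 ≤ n := by omega
      rw [show n + 1 + l = (n + l) + 1 from by omega,
        Finset.prod_Ico_succ_top (by omega), ← Nat.mul_assoc, ih hn]
      rw [Nat.succ_sub_one, Nat.mul_comm, Nat.mul_factorial_pred (by omega)]

/-- `S_{j,l}^{(1)} = (-1)^{j-1} (j+l-1)!/l!` for `j ≥ 1`. -/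
theorem ncStirling_one (j l : ℕ) (hj : 1 ≤ j) :
    ncStirling j l 1 = (-1) ^ (j - 1) * ((j + l - 1).factorial : ℝ) / (l.factorial : ℝ) := by
  have hc : ncStirling j l 1
      = (∏ k ∈ Finset.Ico (l + 1) (j + l), (Polynomial.X - Polynomial.C (k : ℝ))).coeff 0 := by
    rw [ncStirling, Polynomial.coeff_X_mul]
  rw [hc, Polynomial.coeff_zero_eq_eval_zero, Polynomial.eval_prod]
  simp only [Polynomial.eval_sub, Polynomial.eval_X, Polynomial.eval_C, zero_sub]
  have hneg : ∏ k ∈ Finset.Ico (l + 1) (j + l), (-(k:ℝ))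
      = (-1) ^ (Finset.Ico (l + 1) (j + l)).card * ∏ k ∈ Finset.Ico (l + 1) (j + l), (k:ℝ) := by
    rw [← Finset.prod_const, ← Finset.prod_mul_distrib]
    exact Finset.prod_congr rfl fun k _ => by ring
  rw [hneg, Nat.card_Ico]
  have hcard : j + l - (l + 1) = j - 1 := by omega
  have hprod : (∏ k ∈ Finset.Ico (l + 1) (j + l), (k : ℝ))
      = ((j + l - 1).factorial : ℝ) / (l.factorial : ℝ) := by
    have := prod_Ico_fact j l hj
    have hne : (l.factorial : ℝ) ≠ 0 := Nat.cast_ne_zero.mpr l.factorial_ne_zero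
    field_simp
    push_cast [← this]
    ring
  rw [hcard, hprod]
  ring
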